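/- Let N ≥ 1, k ≥ 2, and let Ω ⊆ ℝ^N be an open set of finite Lebesgue measure |Ω|. For each i = 1,…,k let F_i : ℝ → ℝ be continuous with F_i(0) = 0 and satisfying (F2) with constants A_i > 0 and μ_i. Set μ* := max_{1≤i≤k} μ_i and let i₀ be an index attaining this maximum. Then: (a) for every segregated k-tuple U = (u_1,…,u_k) of differentiable functions u_i : ℝ^N → ℝ with |∇u_i|², u_i², and F_i(u_i) integrable on Ω, one has J_Ω(U) ≥ −μ*·|Ω|; (b) the k-tuple U₀ with (U₀)_{i₀} ≡ A_{i₀} and (U₀)_i ≡ 0 for i ≠ i₀ satisfies J_Ω(U₀) = −μ*·|Ω|; (c) if moreover ∫_Ω |∇u_j|² dx > 0 for some index j, then the inequality in (a) is strict: J_Ω(U) > −μ*·|Ω|. -/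

import Mathlib

open MeasureTheory

/-- Triviality of global minimizers: (a) the free energy of any segregated
`k`-tuple is bounded below by `-μ* |Ω|`; (b) the trivial `k`-tuple with the
`i₀`-th component constantly `A i₀` and the others zero attains this value;
(c) if some component has a nontrivial gradient, the inequality is strict. -/
theorem stmt_0
    {N k : ℕ} (hN : 1 ≤ N) (hk : 2 ≤ k)
    (Ω : Set (EuclideanSpace ℝ (Fin N))) (hΩopen : IsOpen Ω)
    (hΩfin : volume Ω < ⊤)
    (F : Fin k → ℝ → ℝ) (hFcont : ∀ i, Continuous (F i))
    (hF0 : ∀ i, F i 0 = 0)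
    (A : Fin k → ℝ) (hA : ∀ i, 0 < A i)
    (μ : Fin k → ℝ) (hμ : ∀ i, μ i = F i (A i) - (A i) ^ 2 / 2)
    (hF2 : ∀ i, ∀ t : ℝ, 0 ≤ t → F i t - t ^ 2 / 2 ≤ μ i)
    (i₀ : Fin k) (hi₀ : ∀ i, μ i ≤ μ i₀) :
    -- (a)
    (∀ u : Fin k → EuclideanSpace ℝ (Fin N) → ℝ,
      (∀ i, Differentiable ℝ (u i)) →
      (∀ i, IntegrableOn (fun x => ‖fderiv ℝ (u i) x‖ ^ 2) Ω) →
      (∀ i, IntegrableOn (fun x => (u i x) ^ 2) Ω) →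
      (∀ i, IntegrableOn (fun x => F i (u i x)) Ω) →
      (∀ i, ∀ᵐ x ∂(volume.restrict Ω), 0 ≤ u i x) →
      (∀ i j, i ≠ j → ∀ᵐ x ∂(volume.restrict Ω), u i x * u j x = 0) →
      -(μ i₀) * (volume Ω).toReal ≤
        ∑ i, ∫ x in Ω,
          (1 / 2 * ‖fderiv ℝ (u i) x‖ ^ 2 + 1 / 2 * (u i x) ^ 2 - F i (u i x)))
    ∧
    -- (b)
    (∑ i, ∫ x in Ω,
        (1 / 2 * ‖fderiv ℝ (fun _ : EuclideanSpace ℝ (Fin N) =>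
            if i = i₀ then A i₀ else 0) x‖ ^ 2
          + 1 / 2 * ((if i = i₀ then A i₀ else 0) : ℝ) ^ 2
          - F i (if i = i₀ then A i₀ else 0))
      = -(μ i₀) * (volume Ω).toReal)
    ∧
    -- (c)
    (∀ u : Fin k → EuclideanSpace ℝ (Fin N) → ℝ,
      (∀ i, Differentiable ℝ (u i)) →
      (∀ i, IntegrableOn (fun x => ‖fderiv ℝ (u i) x‖ ^ 2) Ω) →
      (∀ i, IntegrableOn (fun x => (u i x) ^ 2) Ω) →
      (∀ i, IntegrableOn (fun x => F i (u i x)) Ω) →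
      (∀ i, ∀ᵐ x ∂(volume.restrict Ω), 0 ≤ u i x) →
      (∀ i j, i ≠ j → ∀ᵐ x ∂(volume.restrict Ω), u i x * u j x = 0) →
      (∃ j, 0 < ∫ x in Ω, ‖fderiv ℝ (u j) x‖ ^ 2) →
      -(μ i₀) * (volume Ω).toReal <
        ∑ i, ∫ x in Ω,
          (1 / 2 * ‖fderiv ℝ (u i) x‖ ^ 2 + 1 / 2 * (u i x) ^ 2 - F i (u i x))) := by
  -- μ i₀ is nonnegative
  have hμ0 : 0 ≤ μ i₀ := by
    have := hF2 i₀ 0 le_rfl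
    simpa [hF0 i₀] using this
  -- pointwise lemma for segregated nonnegative tuples
  have pt : ∀ t : Fin k → ℝ, (∀ i, 0 ≤ t i) → (∀ i j, i ≠ j → t i * t j = 0) →
      -(μ i₀) ≤ ∑ i, (1 / 2 * (t i) ^ 2 - F i (t i)) := by
    intro t htn htseg
    have hle : ∑ i, (F i (t i) - (t i) ^ 2 / 2) ≤ μ i₀ := by
      by_cases h : ∀ i, t i = 0
      · have : ∑ i, (F i (t i) - (t i) ^ 2 / 2) = 0 := by
          apply Finset.sum_eq_zero
          intro i _
          simp [h i, hF0 i]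
        rw [this]; exact hμ0
      · push_neg at h
        obtain ⟨m, hm⟩ := h
        have hz : ∀ i, i ≠ m → t i = 0 := by
          intro i hi
          rcases mul_eq_zero.mp (htseg i m hi) with h' | h'
          · exact h'
          · exact absurd h' hm
        have : ∑ i, (F i (t i) - (t i) ^ 2 / 2) = F m (t m) - (t m) ^ 2 / 2 := by
          apply Finset.sum_eq_single_of_mem m (Finset.mem_univ m)
          intro i _ hi
          simp [hz i hi, hF0 i]
        rw [this]
        exact le_trans (hF2 m (t m) (htn m)) (hi₀ m)
    have heq : ∑ i, (1 / 2 * (t i) ^ 2 - F i (t i))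
        = -∑ i, (F i (t i) - (t i) ^ 2 / 2) := by
      rw [← Finset.sum_neg_distrib]
      exact Finset.sum_congr rfl (fun i _ => by ring)
    rw [heq]
    linarith
  -- key integral estimate for the potential part
  have key : ∀ u : Fin k → EuclideanSpace ℝ (Fin N) → ℝ,
      (∀ i, IntegrableOn (fun x => (u i x) ^ 2) Ω) →
      (∀ i, IntegrableOn (fun x => F i (u i x)) Ω) →
      (∀ i, ∀ᵐ x ∂(volume.restrict Ω), 0 ≤ u i x) →
      (∀ i j, i ≠ j → ∀ᵐ x ∂(volume.restrict Ω), u i x * u j x = 0) →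
      -(μ i₀) * (volume Ω).toReal ≤
        ∑ i, ∫ x in Ω, (1 / 2 * (u i x) ^ 2 - F i (u i x)) := by
    intro u hsq hFi hnn hseg
    have hint : ∀ i, IntegrableOn (fun x => 1 / 2 * (u i x) ^ 2 - F i (u i x)) Ω :=
      fun i => ((hsq i).const_mul _).sub (hFi i)
    rw [← integral_finset_sum _ (fun i _ => hint i)]
    have hconst : ∫ _x in Ω, (-(μ i₀)) = -(μ i₀) * (volume Ω).toReal := by
      rw [setIntegral_const, smul_eq_mul, mul_comm, measureReal_def]
    rw [← hconst]
    have h1 : ∀ᵐ x ∂(volume.restrict Ω), ∀ i, 0 ≤ u i x := ae_all_iff.mpr hnn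
    have h2 : ∀ᵐ x ∂(volume.restrict Ω), ∀ i j, i ≠ j → u i x * u j x = 0 := by
      rw [ae_all_iff]
      intro i
      rw [ae_all_iff]
      intro j
      rcases eq_or_ne i j with h | h
      · exact Filter.Eventually.of_forall fun x hij => absurd h hij
      · filter_upwards [hseg i j h] with x hx _
        exact hx
    apply integral_mono_ae
    · exact (integrableOn_const hΩfin.ne)
    · exact integrable_finset_sum _ (fun i _ => hint i)
    · filter_upwards [h1, h2] with x hx1 hx2
      exact pt (fun i => u i x) hx1 hx2
  -- splitting of the full integrand
  have split : ∀ u : Fin k → EuclideanSpace ℝ (Fin N) → ℝ,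
      (∀ i, IntegrableOn (fun x => ‖fderiv ℝ (u i) x‖ ^ 2) Ω) →
      (∀ i, IntegrableOn (fun x => (u i x) ^ 2) Ω) →
      (∀ i, IntegrableOn (fun x => F i (u i x)) Ω) →
      ∀ i, (∫ x in Ω,
          (1 / 2 * ‖fderiv ℝ (u i) x‖ ^ 2 + 1 / 2 * (u i x) ^ 2 - F i (u i x)))
        = (∫ x in Ω, 1 / 2 * ‖fderiv ℝ (u i) x‖ ^ 2)
          + ∫ x in Ω, (1 / 2 * (u i x) ^ 2 - F i (u i x)) := by
    intro u hgrad hsq hFi i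
    have hint2 : IntegrableOn (fun x => 1 / 2 * (u i x) ^ 2 - F i (u i x)) Ω :=
      ((hsq i).const_mul _).sub (hFi i)
    simp only [add_sub_assoc]
    exact integral_add ((hgrad i).const_mul _) hint2
  have gradnn : ∀ u : Fin k → EuclideanSpace ℝ (Fin N) → ℝ, ∀ i : Fin k,
      (0 : ℝ) ≤ ∫ x in Ω, 1 / 2 * ‖fderiv ℝ (u i) x‖ ^ 2 := by
    intro u i
    apply integral_nonneg
    intro x
    positivity
  refine ⟨?_, ?_, ?_⟩
  · -- (a)
    intro u hdiff hgrad hsq hFi hnn hseg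
    have hs : ∑ i, ∫ x in Ω,
        (1 / 2 * ‖fderiv ℝ (u i) x‖ ^ 2 + 1 / 2 * (u i x) ^ 2 - F i (u i x))
        = (∑ i, ∫ x in Ω, 1 / 2 * ‖fderiv ℝ (u i) x‖ ^ 2)
          + ∑ i, ∫ x in Ω, (1 / 2 * (u i x) ^ 2 - F i (u i x)) := by
      rw [← Finset.sum_add_distrib]
      exact Finset.sum_congr rfl (fun i _ => split u hgrad hsq hFi i)
    rw [hs]
    have hg : (0 : ℝ) ≤ ∑ i, ∫ x in Ω, 1 / 2 * ‖fderiv ℝ (u i) x‖ ^ 2 :=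
      Finset.sum_nonneg (fun i _ => gradnn u i)
    have := key u hsq hFi hnn hseg
    linarith
  · -- (b)
    have hval : ∀ i : Fin k, (∫ x in Ω,
        (1 / 2 * ‖fderiv ℝ (fun _ : EuclideanSpace ℝ (Fin N) =>
            if i = i₀ then A i₀ else 0) x‖ ^ 2
          + 1 / 2 * ((if i = i₀ then A i₀ else 0) : ℝ) ^ 2
          - F i (if i = i₀ then A i₀ else 0)))
        = (volume Ω).toReal *
            (1 / 2 * ((if i = i₀ then A i₀ else 0) : ℝ) ^ 2
              - F i (if i = i₀ then A i₀ else 0)) := by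
      intro i
      have : (fun x : EuclideanSpace ℝ (Fin N) =>
          (1 / 2 * ‖fderiv ℝ (fun _ : EuclideanSpace ℝ (Fin N) =>
              if i = i₀ then A i₀ else 0) x‖ ^ 2
            + 1 / 2 * ((if i = i₀ then A i₀ else 0) : ℝ) ^ 2
            - F i (if i = i₀ then A i₀ else 0)))
          = fun _ => (1 / 2 * ((if i = i₀ then A i₀ else 0) : ℝ) ^ 2
            - F i (if i = i₀ then A i₀ else 0)) := by
        funext x
        rw [fderiv_fun_const]
        simp
      rw [this, setIntegral_const, smul_eq_mul, measureReal_def]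
    calc ∑ i, ∫ x in Ω,
        (1 / 2 * ‖fderiv ℝ (fun _ : EuclideanSpace ℝ (Fin N) =>
            if i = i₀ then A i₀ else 0) x‖ ^ 2
          + 1 / 2 * ((if i = i₀ then A i₀ else 0) : ℝ) ^ 2
          - F i (if i = i₀ then A i₀ else 0))
        = ∑ i, (volume Ω).toReal *
            (1 / 2 * ((if i = i₀ then A i₀ else 0) : ℝ) ^ 2
              - F i (if i = i₀ then A i₀ else 0)) :=
          Finset.sum_congr rfl (fun i _ => hval i)
      _ = (volume Ω).toReal *
            (1 / 2 * ((if i₀ = i₀ then A i₀ else 0) : ℝ) ^ 2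
              - F i₀ (if i₀ = i₀ then A i₀ else 0)) := by
          apply Finset.sum_eq_single_of_mem i₀ (Finset.mem_univ i₀)
          intro i _ hi
          simp [hi, hF0 i]
      _ = -(μ i₀) * (volume Ω).toReal := by
          simp only [eq_self_iff_true, if_true, hμ i₀]
          ring
  · -- (c)
    intro u hdiff hgrad hsq hFi hnn hseg ⟨j, hj⟩
    have hs : ∑ i, ∫ x in Ω,
        (1 / 2 * ‖fderiv ℝ (u i) x‖ ^ 2 + 1 / 2 * (u i x) ^ 2 - F i (u i x))
        = (∑ i, ∫ x in Ω, 1 / 2 * ‖fderiv ℝ (u i) x‖ ^ 2)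
          + ∑ i, ∫ x in Ω, (1 / 2 * (u i x) ^ 2 - F i (u i x)) := by
      rw [← Finset.sum_add_distrib]
      exact Finset.sum_congr rfl (fun i _ => split u hgrad hsq hFi i)
    rw [hs]
    have hjpos : (0 : ℝ) < ∫ x in Ω, 1 / 2 * ‖fderiv ℝ (u j) x‖ ^ 2 := by
      have : (∫ x in Ω, 1 / 2 * ‖fderiv ℝ (u j) x‖ ^ 2)
          = 1 / 2 * ∫ x in Ω, ‖fderiv ℝ (u j) x‖ ^ 2 := by
        rw [← integral_const_mul]
      rw [this]
      linarith
    have hg : (∫ x in Ω, 1 / 2 * ‖fderiv ℝ (u j) x‖ ^ 2)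
        ≤ ∑ i, ∫ x in Ω, 1 / 2 * ‖fderiv ℝ (u i) x‖ ^ 2 :=
      Finset.single_le_sum (fun i _ => gradnn u i) (Finset.mem_univ j)
    have := key u hsq hFi hnn hseg
    linarith
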